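/- Let X be a connected quandle of type t (i.e., t is a positive integer with x ◁^t y = x for all x, y ∈ X, where ◁^t denotes the t-fold right operation). Then for all x, y ∈ X, the element e_x^t lies in the center of As(X) and e_x^t = e_y^t. -/

import Mathlib

/-- A quandle in the convention of the paper. -/
class PQuandle (X : Type*) where
  op : X → X → X
  op_self : ∀ a : X, op a a = a
  op_bij : ∀ a : X, Function.Bijective (fun x => op x a)
  op_distrib : ∀ a b c : X, op (op a b) c = op (op a c) (op b c)

infixl:65 " ◁ " => PQuandle.op

namespace PQuandle

variable {X : Type*} [PQuandle X]

/-- The `n`-fold right operation `x ◁ⁿ y`. -/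
def opn (x : X) (n : ℕ) (y : X) : X := (fun z => z ◁ y)^[n] x

/-- The right translation `(· ◁ y)` as a permutation of `X`. -/
noncomputable def act (y : X) : Equiv.Perm X := Equiv.ofBijective _ (op_bij y)

@[simp] lemma act_apply (y x : X) : act y x = x ◁ y := rfl

/-- The inner automorphism group `Inn(X)`. -/
noncomputable def Inn (X : Type*) [PQuandle X] : Subgroup (Equiv.Perm X) :=
  Subgroup.closure (Set.range (act (X := X)))

/-- The relators `e_{x ◁ y}⁻¹ e_y⁻¹ e_x e_y` of the adjoint group. -/
def adjRels (X : Type*) [PQuandle X] : Set (FreeGroup X) :=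
  { r | ∃ x y : X,
      r = (FreeGroup.of (x ◁ y))⁻¹ * (FreeGroup.of y)⁻¹ * FreeGroup.of x * FreeGroup.of y }

/-- The adjoint (enveloping) group `As(X)` of the quandle `X`. -/
def Adj (X : Type*) [PQuandle X] : Type _ := PresentedGroup (adjRels X)

instance : Group (Adj X) := by unfold Adj; infer_instance

/-- The generator `e_x` of `As(X)`. -/
def gen (x : X) : Adj X := PresentedGroup.of x

lemma gen_rel (x y : X) : gen (x ◁ y) = (gen y)⁻¹ * gen x * gen y := by
  have h : ((FreeGroup.of (x ◁ y))⁻¹ * (FreeGroup.of y)⁻¹ * FreeGroup.of x * FreeGroup.of y :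
      FreeGroup X) ∈ Subgroup.normalClosure (adjRels X) :=
    Subgroup.subset_normalClosure ⟨x, y, rfl⟩
  have h2 : ((gen (x ◁ y))⁻¹ * (gen y)⁻¹ * gen x * gen y : Adj X) = 1 := by
    have := (QuotientGroup.eq_one_iff
      (((FreeGroup.of (x ◁ y))⁻¹ * (FreeGroup.of y)⁻¹ * FreeGroup.of x * FreeGroup.of y :
        FreeGroup X))).mpr h
    exact this
  calc gen (x ◁ y)
      = gen (x ◁ y) * ((gen (x ◁ y))⁻¹ * (gen y)⁻¹ * gen x * gen y) := by rw [h2, mul_one]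
    _ = (gen y)⁻¹ * gen x * gen y := by group

lemma act_mul_act (x y : X) : act y * act x = act (x ◁ y) * act y := by
  ext z
  simp only [Equiv.Perm.mul_apply, act_apply]
  exact op_distrib z x y

/-- The homomorphism `As(X) → Perm(X)` sending `e_y` to the inverse of the right
translation by `y`; it encodes the right action of `As(X)` on `X`. -/
noncomputable def innHom : Adj X →* Equiv.Perm X :=
  PresentedGroup.toGroup (f := fun y : X => (act y)⁻¹) (by
    rintro r ⟨x, y, rfl⟩
    simp only [map_mul, map_inv, FreeGroup.lift_apply_of, inv_inv]
    have := act_mul_act x y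
    calc act (x ◁ y) * act y * (act x)⁻¹ * (act y)⁻¹
        = (act y * act x) * (act x)⁻¹ * (act y)⁻¹ := by rw [this]
      _ = 1 := by group)

@[simp] lemma innHom_gen (y : X) : innHom (gen y) = (act y)⁻¹ :=
  PresentedGroup.toGroup.of _

/-- The right action of `As(X)` on `X`: `x · g`. -/
noncomputable def ract (x : X) (g : Adj X) : X := (innHom g)⁻¹ x

@[simp] lemma ract_gen (x y : X) : ract x (gen y) = x ◁ y := by
  simp [ract]

lemma ract_mul (x : X) (g h : Adj X) : ract x (g * h) = ract (ract x g) h := by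
  simp [ract, map_mul]

/-- A quandle is connected if the right action of `As(X)` on `X` is transitive. -/
def Connected (X : Type*) [PQuandle X] : Prop :=
  ∀ x y : X, ∃ g : Adj X, ract x g = y

/-- The homomorphism `ε : As(X) → ℤ` sending every generator `e_x` to `1`. -/
def eps : Adj X →* Multiplicative ℤ :=
  PresentedGroup.toGroup (f := fun _ : X => Multiplicative.ofAdd 1) (by
    rintro r ⟨x, y, rfl⟩
    simp only [map_mul, map_inv, FreeGroup.lift_apply_of]
    group)

@[simp] lemma eps_gen (x : X) : eps (gen x) = Multiplicative.ofAdd 1 :=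
  PresentedGroup.toGroup.of _

/-- The underlying set of the universal covering quandle: `Ker ε`. -/
def covOp (a : X) (g h : (eps (X := X)).ker) : (eps (X := X)).ker :=
  ⟨(gen a)⁻¹ * g.1 * (h.1)⁻¹ * gen a * h.1, by
    have hg : eps g.1 = 1 := g.2
    have hh : eps h.1 = 1 := h.2
    simp only [MonoidHom.mem_ker, map_mul, map_inv, hg, hh]
    group⟩

/-- `n`-fold covering operation. -/
def covOpn (a : X) (g : (eps (X := X)).ker) (n : ℕ) (h : (eps (X := X)).ker) :
    (eps (X := X)).ker := (fun u => covOp a u h)^[n] g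

/-- The right translation of the covering quandle as a permutation. -/
def covAct (a : X) (h : (eps (X := X)).ker) : Equiv.Perm (eps (X := X)).ker where
  toFun g := covOp a g h
  invFun g := ⟨gen a * g.1 * (h.1)⁻¹ * (gen a)⁻¹ * h.1, by
    have hg : eps g.1 = 1 := g.2
    have hh : eps h.1 = 1 := h.2
    simp only [MonoidHom.mem_ker, map_mul, map_inv, hg, hh]
    group⟩
  left_inv g := by
    apply Subtype.ext
    simp only [covOp]
    group
  right_inv g := by
    apply Subtype.ext
    simp only [covOp]
    group

end PQuandle

open PQuandle in
/-- In a connected quandle of type `t`, `e_x^t` is central in `As(X)` and `e_x^t = e_y^t`. -/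
theorem stmt2 (X : Type*) [PQuandle X] (hconn : Connected X) (t : ℕ) (ht : 0 < t)
    (htype : ∀ x y : X, opn x t y = x) (x y : X) :
    gen x ^ t ∈ Subgroup.center (Adj X) ∧ gen x ^ t = gen y ^ t := by
  -- conjugation formula
  have hconj : ∀ (n : ℕ) (a b : X),
      gen (opn a n b) = (gen b)⁻¹ ^ n * gen a * gen b ^ n := by
    intro n a b
    induction n with
    | zero => simp [opn]
    | succ n ih =>
      have : opn a (n+1) b = opn a n b ◁ b := by
        simp [opn, Function.iterate_succ_apply']
      rw [this, gen_rel, ih]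
      group
  -- centrality of gen b ^ t for any b
  have hcomm : ∀ a b : X, Commute (gen b ^ t) (gen a) := by
    intro a b
    have h := hconj t a b
    rw [htype a b] at h
    have h2 : gen a = (gen b ^ t)⁻¹ * gen a * gen b ^ t := by
      rw [← inv_pow]; exact h
    calc gen b ^ t * gen a
        = gen b ^ t * ((gen b ^ t)⁻¹ * gen a * gen b ^ t) := by rw [← h2]
      _ = gen a * gen b ^ t := by group
  have hcentral : ∀ b : X, gen b ^ t ∈ Subgroup.center (Adj X) := by
    intro b
    rw [Subgroup.mem_center_iff]
    intro g
    have hg : g ∈ Subgroup.closure (Set.range (gen (X := X))) := by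
      have hcl : Subgroup.closure (Set.range (gen (X := X))) = ⊤ :=
        PresentedGroup.closure_range_of _
      rw [hcl]
      trivial
    induction hg using Subgroup.closure_induction with
    | mem z hz => obtain ⟨a, rfl⟩ := hz; exact (hcomm a b).symm
    | one => simp
    | mul u v hu hv ihu ihv => rw [mul_assoc, ihv, ← mul_assoc, ihu, mul_assoc]
    | inv u hu ihu =>
      have := ihu
      calc u⁻¹ * gen b ^ t = u⁻¹ * (gen b ^ t * u) * u⁻¹ := by group
        _ = u⁻¹ * (u * gen b ^ t) * u⁻¹ := by rw [← this]
        _ = gen b ^ t * u⁻¹ := by group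
  refine ⟨hcentral x, ?_⟩
  -- invariance of z ↦ gen z ^ t under the right action
  have hop : ∀ a b : X, gen (a ◁ b) ^ t = gen a ^ t := by
    intro a b
    rw [gen_rel]
    have e : (gen b)⁻¹ * gen a * gen b = (gen b)⁻¹ * gen a * ((gen b)⁻¹)⁻¹ := by group
    rw [e, conj_pow, inv_inv]
    have hc : gen a ^ t * gen b = gen b * gen a ^ t :=
      ((Subgroup.mem_center_iff.mp (hcentral a)) (gen b)).symm
    calc (gen b)⁻¹ * gen a ^ t * gen b = (gen b)⁻¹ * (gen a ^ t * gen b) := by group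
      _ = (gen b)⁻¹ * (gen b * gen a ^ t) := by rw [hc]
      _ = gen a ^ t := by group
  have hract : ∀ (g : Adj X) (z : X), gen (ract z g) ^ t = gen z ^ t := by
    intro g
    have hg : g ∈ Subgroup.closure (Set.range (gen (X := X))) := by
      have hcl : Subgroup.closure (Set.range (gen (X := X))) = ⊤ :=
        PresentedGroup.closure_range_of _
      rw [hcl]
      trivial
    induction hg using Subgroup.closure_induction with
    | mem u hu =>
      obtain ⟨a, rfl⟩ := hu
      intro z
      rw [ract_gen]
      exact hop z a
    | one => intro z; simp [ract]
    | mul u v hu hv ihu ihv =>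
      intro z
      rw [ract_mul, ihv, ihu]
    | inv u hu ihu =>
      intro z
      have := ihu (ract z u⁻¹)
      rw [← ract_mul, inv_mul_cancel] at this
      simp only [ract, map_one, inv_one, Equiv.Perm.one_apply] at this
      exact this.symm
  obtain ⟨g, hg⟩ := hconn x y
  rw [← hg, hract]
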